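/- arXiv:2207.01689 — 2 statements merged into one kernel-verified Lean document; each statement's English description precedes it below -/
import Mathlib

section
/- For |q|<1, |p|<1, |x|<1, |y|<1 and p^c ≠ 1: Ψ₁(q^a,p^{b+1};p^c,q^d;q,p,x,y) = Ψ₁(q^a,p^b;p^c,q^d;q,p,x,y) + [p^b(1−q^a)y/(1−p^c)]·Ψ₁(q^{a+1},p^{b+1};p^{c+1},q^d;q,p,x,y). -/
open scoped BigOperators
open Filter

/-- q-shifted factorial `(z;q)_k`. -/
noncomputable def qPoch (q z : ℂ) (k : ℕ) : ℂ :=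
  ∏ r ∈ Finset.range k, (1 - z * q ^ r)

/-- infinite q-shifted factorial `(z;q)_∞`. -/
noncomputable def qPochInf (q z : ℂ) : ℂ := ∏' r : ℕ, (1 - z * q ^ r)

/-- bibasic Humbert function `Ψ₁(A,B;C,D;q,p,x,y)` with `A=qᵃ, B=pᵇ, C=pᶜ, D=q^d`. -/
noncomputable def Psi1 (q p A B C D x y : ℂ) : ℂ :=
  ∑' kl : ℕ × ℕ,
    qPoch q A (kl.1 + kl.2) * qPoch p B kl.2 /
      (qPoch p C kl.2 * qPoch q D kl.1 * qPoch q q kl.1 * qPoch p p kl.2) *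
      x ^ kl.1 * y ^ kl.2

/-- bibasic Humbert function `Ψ₂(A;B,C;q,p,x,y)` with `A=qᵃ, B=pᵇ, C=qᶜ`. -/
noncomputable def Psi2 (q p A B C x y : ℂ) : ℂ :=
  ∑' kl : ℕ × ℕ,
    qPoch q A (kl.1 + kl.2) /
      (qPoch p B kl.2 * qPoch q C kl.1 * qPoch q q kl.1 * qPoch p p kl.2) *
      x ^ kl.1 * y ^ kl.2

/-- the q-difference operator `D_{x,q}`. -/
noncomputable def qDiff (q : ℂ) (f : ℂ → ℂ) : ℂ → ℂ :=
  fun x => (f x - f (q * x)) / ((1 - q) * x)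

/-- basic hypergeometric series `₂φ₁(A,B;C;q,x)`. -/
noncomputable def phi21 (q A B C x : ℂ) : ℂ :=
  ∑' k : ℕ, qPoch q A k * qPoch q B k / (qPoch q C k * qPoch q q k) * x ^ k

/-- basic confluent hypergeometric series `₁φ₁(A;C;q,z)`. -/
noncomputable def phi11 (q A C z : ℂ) : ℂ :=
  ∑' k : ℕ, qPoch q A k / (qPoch q C k * qPoch q q k) *
    (-1) ^ k * q ^ (k * (k - 1) / 2) * z ^ k


private lemma qPoch_succ_left (q z : ℂ) (n : ℕ) :
    qPoch q z (n + 1) = (1 - z) * qPoch q (z * q) n := by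
  unfold qPoch
  rw [Finset.prod_range_succ', mul_comm]
  congr 1
  · simp
  · exact Finset.prod_congr rfl fun r _ => by rw [pow_succ]; ring_nf

private lemma qPoch_succ_right (q z : ℂ) (n : ℕ) :
    qPoch q z (n + 1) = qPoch q z n * (1 - z * q ^ n) := Finset.prod_range_succ _ _

private lemma qPoch_zero (q z : ℂ) : qPoch q z 0 = 1 := by simp [qPoch]

private lemma one_sub_ne_zero_of_abs_lt_one {z : ℂ} (h : ‖z‖ < 1) :
    (1 : ℂ) - z ≠ 0 := by
  intro h0
  have : z = 1 := by linear_combination -h0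
  simp [this] at h

private lemma qPoch_base_ne_zero {q : ℂ} (hq : ‖q‖ < 1) (k : ℕ) :
    qPoch q q k ≠ 0 := by
  unfold qPoch
  refine Finset.prod_ne_zero_iff.2 fun r _ => one_sub_ne_zero_of_abs_lt_one ?_
  have h1 : ‖q‖ ^ (r + 1) < 1 :=
    pow_lt_one₀ (norm_nonneg q) hq (Nat.succ_ne_zero r)
  rw [norm_mul, norm_pow]
  calc ‖q‖ * ‖q‖ ^ r = ‖q‖ ^ (r + 1) := by ring
    _ < 1 := h1


/-- exp(-2t) ≤ 1 - t for 0 ≤ t ≤ 1/2 -/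
private lemma exp_neg_two_mul_le {t : ℝ} (h0 : 0 ≤ t) (h1 : t ≤ 1/2) :
    Real.exp (-(2 * t)) ≤ 1 - t := by
  have he : Real.exp (-(2 * t)) * Real.exp (2 * t) = 1 := by
    rw [← Real.exp_add]; simp
  have h2 : 2 * t + 1 ≤ Real.exp (2 * t) := Real.add_one_le_exp _
  have h3 : (0:ℝ) < Real.exp (2 * t) := Real.exp_pos _
  nlinarith [Real.exp_pos (-(2 * t))]

/-- geometric partial sums bounded -/
private lemma geom_partial_le {r : ℝ} (h0 : 0 ≤ r) (h1 : r < 1) (k : ℕ) :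
    ∑ i ∈ Finset.range k, r ^ i ≤ (1 - r)⁻¹ := by
  have hs : Summable fun i : ℕ => r ^ i := summable_geometric_of_lt_one h0 h1
  calc ∑ i ∈ Finset.range k, r ^ i ≤ ∑' i : ℕ, r ^ i :=
        Summable.sum_le_tsum _ (fun i _ => pow_nonneg h0 i) hs
    _ = (1 - r)⁻¹ := tsum_geometric_of_lt_one h0 h1

private lemma abs_qPoch_le {q : ℂ} (hq : ‖q‖ < 1) (z : ℂ) (k : ℕ) :
    ‖qPoch q z k‖ ≤ Real.exp (‖z‖ * (1 - ‖q‖)⁻¹) := by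
  unfold qPoch
  rw [norm_prod]
  calc ∏ r ∈ Finset.range k, ‖1 - z * q ^ r‖
      ≤ ∏ r ∈ Finset.range k, Real.exp (‖z‖ * ‖q‖ ^ r) := by
        refine Finset.prod_le_prod (fun r _ => norm_nonneg _) fun r _ => ?_
        calc ‖1 - z * q ^ r‖ ≤ ‖1‖ + ‖z * q ^ r‖ :=
              norm_sub_le 1 _
          _ ≤ Real.exp (‖z‖ * ‖q‖ ^ r) := by
              rw [norm_one, norm_mul, norm_pow]
              linarith [Real.add_one_le_exp (‖z‖ * ‖q‖ ^ r)]
    _ = Real.exp (∑ r ∈ Finset.range k, ‖z‖ * ‖q‖ ^ r) :=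
        (Real.exp_sum _ _).symm
    _ ≤ Real.exp (‖z‖ * (1 - ‖q‖)⁻¹) := by
        apply Real.exp_le_exp.2
        rw [← Finset.mul_sum]
        exact mul_le_mul_of_nonneg_left (geom_partial_le (norm_nonneg q) hq k)
          (norm_nonneg z)

open Classical in
private lemma qPoch_lower {q : ℂ} (hq : ‖q‖ < 1) (z : ℂ) :
    ∃ c : ℝ, 0 < c ∧ ∀ k, qPoch q z k ≠ 0 → c ≤ ‖qPoch q z k‖ := by
  set ρ := ‖q‖ with hρdef
  set w := ‖z‖ with hwdef
  have hρ0 : 0 ≤ ρ := norm_nonneg q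
  have hρ1 : 0 < 1 - ρ := by linarith
  -- choose N with w * ρ^n ≤ 1/2 for n ≥ N
  have htend : Tendsto (fun n : ℕ => w * ρ ^ n) atTop (nhds 0) := by
    have := (tendsto_pow_atTop_nhds_zero_of_lt_one hρ0 hq).const_mul w
    simpa using this
  have hev : ∀ᶠ n in atTop, w * ρ ^ n ≤ 1/2 := by
    filter_upwards [htend.eventually (eventually_le_nhds (by norm_num : (0:ℝ) < 1/2))] with n h
    exact h
  obtain ⟨N, hN⟩ := hev.exists_forall_of_atTop
  -- tail lower bound
  set e0 : ℝ := Real.exp (-(2 * (w * (1 - ρ)⁻¹))) with he0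
  have he0pos : 0 < e0 := Real.exp_pos _
  have he0le1 : e0 ≤ 1 := Real.exp_le_one_iff.2 (neg_nonpos.2 (by positivity))
  -- finite part
  set s : Finset ℕ := (Finset.range (N + 1)).filter (fun k => qPoch q z k ≠ 0) with hs
  have hmem0 : 0 ∈ s := by
    simp [hs, qPoch_zero, Finset.mem_filter, Nat.succ_pos]
  have hne : s.Nonempty := ⟨0, hmem0⟩
  set c0 : ℝ := s.inf' hne (fun k => ‖qPoch q z k‖) with hc0
  have hc0pos : 0 < c0 := by
    rw [hc0, Finset.lt_inf'_iff]
    intro k hk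
    have : qPoch q z k ≠ 0 := (Finset.mem_filter.1 hk).2
    exact norm_pos_iff.2 this
  refine ⟨c0 * e0, mul_pos hc0pos he0pos, fun k hk => ?_⟩
  rcases le_or_gt k N with hkN | hNk
  · have hks : k ∈ s := Finset.mem_filter.2 ⟨Finset.mem_range.2 (by omega), hk⟩
    have : c0 ≤ ‖qPoch q z k‖ := Finset.inf'_le _ hks
    nlinarith [norm_nonneg (qPoch q z k)]
  · -- k > N : split product
    have hsplit : qPoch q z k = qPoch q z N * ∏ r ∈ Finset.Ico N k, (1 - z * q ^ r) := by
      unfold qPoch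
      exact (Finset.prod_range_mul_prod_Ico _ hNk.le).symm
    have hN0 : qPoch q z N ≠ 0 := fun h => hk (by rw [hsplit, h, zero_mul])
    have hNs : N ∈ s := Finset.mem_filter.2 ⟨Finset.mem_range.2 (by omega), hN0⟩
    have h1 : c0 ≤ ‖qPoch q z N‖ := Finset.inf'_le _ hNs
    have h2 : e0 ≤ ‖∏ r ∈ Finset.Ico N k, (1 - z * q ^ r)‖ := by
      rw [norm_prod]
      calc e0 ≤ ∏ r ∈ Finset.Ico N k, Real.exp (-(2 * (w * ρ ^ r))) := by
            rw [← Real.exp_sum]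
            apply Real.exp_le_exp.2
            have hsum : ∑ r ∈ Finset.Ico N k, w * ρ ^ r ≤ w * (1 - ρ)⁻¹ := by
              calc ∑ r ∈ Finset.Ico N k, w * ρ ^ r
                  ≤ ∑ r ∈ Finset.range k, w * ρ ^ r := by
                    apply Finset.sum_le_sum_of_subset_of_nonneg
                    · intro r hr; exact Finset.mem_range.2 (Finset.mem_Ico.1 hr).2
                    · intro r _ _; positivity
                _ ≤ w * (1 - ρ)⁻¹ := by
                    rw [← Finset.mul_sum]
                    exact mul_le_mul_of_nonneg_left (geom_partial_le hρ0 hq k)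
                      (norm_nonneg z)
            have heq : ∑ r ∈ Finset.Ico N k, -(2 * (w * ρ ^ r))
                = -(2 * ∑ r ∈ Finset.Ico N k, w * ρ ^ r) := by
              rw [Finset.mul_sum, ← Finset.sum_neg_distrib]
            rw [heq]
            linarith
        _ ≤ ∏ r ∈ Finset.Ico N k, ‖1 - z * q ^ r‖ := by
            refine Finset.prod_le_prod (fun r _ => (Real.exp_pos _).le) fun r hr => ?_
            have hrN : N ≤ r := (Finset.mem_Ico.1 hr).1
            have ht0 : 0 ≤ w * ρ ^ r := by positivity
            have ht1 : w * ρ ^ r ≤ 1/2 := hN r hrN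
            calc Real.exp (-(2 * (w * ρ ^ r))) ≤ 1 - w * ρ ^ r :=
                  exp_neg_two_mul_le ht0 ht1
              _ ≤ ‖1 - z * q ^ r‖ := by
                  have := norm_sub_norm_le 1 (z * q ^ r)
                  rw [norm_one, norm_mul, norm_pow] at this
                  linarith
    rw [hsplit, norm_mul]
    exact mul_le_mul h1 h2 he0pos.le (norm_nonneg _)

private lemma summable_term {q p : ℂ} (A B C D x y : ℂ)
    (hq : ‖q‖ < 1) (hp : ‖p‖ < 1)
    (hx : ‖x‖ < 1) (hy : ‖y‖ < 1) :
    Summable (fun kl : ℕ × ℕ =>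
      qPoch q A (kl.1 + kl.2) * qPoch p B kl.2 /
        (qPoch p C kl.2 * qPoch q D kl.1 * qPoch q q kl.1 * qPoch p p kl.2) *
        x ^ kl.1 * y ^ kl.2) := by
  obtain ⟨cC, hcC, hC⟩ := qPoch_lower hp C
  obtain ⟨cD, hcD, hD⟩ := qPoch_lower hq D
  obtain ⟨cq, hcq, hqq⟩ := qPoch_lower hq q
  obtain ⟨cp, hcp, hpp⟩ := qPoch_lower hp p
  set MA : ℝ := Real.exp (‖A‖ * (1 - ‖q‖)⁻¹) with hMA
  set MB : ℝ := Real.exp (‖B‖ * (1 - ‖p‖)⁻¹) with hMB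
  set M : ℝ := MA * MB / (cC * cD * cq * cp) with hM
  have hMpos : 0 < M := by
    rw [hM]; positivity
  apply Summable.of_norm_bounded
    (g := fun kl : ℕ × ℕ => M * (‖x‖ ^ kl.1 * ‖y‖ ^ kl.2))
  · exact ((summable_geometric_of_lt_one (norm_nonneg x) hx).mul_of_nonneg
      (summable_geometric_of_lt_one (norm_nonneg y) hy)
      (fun k => pow_nonneg (norm_nonneg x) k)
      (fun l => pow_nonneg (norm_nonneg y) l)).mul_left M
  · rintro ⟨k, l⟩
    simp only [norm_mul, norm_div, norm_pow]
    set den := qPoch p C l * qPoch q D k * qPoch q q k * qPoch p p l with hden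
    have habs : ‖qPoch p C l‖ * ‖qPoch q D k‖ *
        ‖qPoch q q k‖ * ‖qPoch p p l‖ = ‖den‖ := by
      rw [hden]; simp [norm_mul]
    rw [habs]
    by_cases h0 : den = 0
    · rw [h0]
      simp only [norm_zero, div_zero, zero_mul]
      positivity
    · have hC0 : qPoch p C l ≠ 0 := by intro h; apply h0; rw [hden, h]; ring
      have hD0 : qPoch q D k ≠ 0 := by intro h; apply h0; rw [hden, h]; ring
      have hq0 : qPoch q q k ≠ 0 := by intro h; apply h0; rw [hden, h]; ring
      have hp0 : qPoch p p l ≠ 0 := by intro h; apply h0; rw [hden, h]; ring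
      have hnum : ‖qPoch q A (k + l)‖ * ‖qPoch p B l‖ ≤ MA * MB :=
        mul_le_mul (abs_qPoch_le hq A _) (abs_qPoch_le hp B _) (norm_nonneg _)
          (Real.exp_pos _).le
      have hdenlb : cC * cD * cq * cp ≤ ‖den‖ := by
        rw [hden, norm_mul, norm_mul, norm_mul]
        refine mul_le_mul (mul_le_mul (mul_le_mul (hC _ hC0) (hD _ hD0)
          hcD.le (norm_nonneg _)) (hqq _ hq0) hcq.le (by positivity))
          (hpp _ hp0) hcp.le (by positivity)
      have hdpos : 0 < ‖den‖ := norm_pos_iff.2 h0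
      rw [hM]
      have h1 : ‖qPoch q A (k + l)‖ * ‖qPoch p B l‖ /
          ‖den‖ ≤ MA * MB / (cC * cD * cq * cp) := by
        apply div_le_div₀ (by positivity) hnum (by positivity) hdenlb
      calc ‖qPoch q A (k + l)‖ * ‖qPoch p B l‖ /
            ‖den‖ * ‖x‖ ^ k * ‖y‖ ^ l
          ≤ MA * MB / (cC * cD * cq * cp) * ‖x‖ ^ k * ‖y‖ ^ l := by
            have hx0 : (0:ℝ) ≤ ‖x‖ ^ k := by positivity
            have hy0 : (0:ℝ) ≤ ‖y‖ ^ l := by positivity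
            exact mul_le_mul_of_nonneg_right (mul_le_mul_of_nonneg_right h1 hx0) hy0
        _ = MA * MB / (cC * cD * cq * cp) * (‖x‖ ^ k * ‖y‖ ^ l) := by
            ring

private lemma term_rel {q p : ℂ} (A B C D x y : ℂ)
    (hq : ‖q‖ < 1) (hp : ‖p‖ < 1)
    (hC : (1 : ℂ) - C ≠ 0) (k l : ℕ) :
    qPoch q A (k + (l + 1)) * qPoch p (B * p) (l + 1) /
        (qPoch p C (l + 1) * qPoch q D k * qPoch q q k * qPoch p p (l + 1)) *
        x ^ k * y ^ (l + 1) -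
      qPoch q A (k + (l + 1)) * qPoch p B (l + 1) /
        (qPoch p C (l + 1) * qPoch q D k * qPoch q q k * qPoch p p (l + 1)) *
        x ^ k * y ^ (l + 1) =
      B * (1 - A) * y / (1 - C) *
        (qPoch q (A * q) (k + l) * qPoch p (B * p) l /
          (qPoch p (C * p) l * qPoch q D k * qPoch q q k * qPoch p p l) *
          x ^ k * y ^ l) := by
  have hkl : k + (l + 1) = (k + l) + 1 := rfl
  rw [hkl, qPoch_succ_left q A, qPoch_succ_left p B, qPoch_succ_left p C,
    qPoch_succ_right p (B * p), qPoch_succ_right p p]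
  have hT : qPoch q q k ≠ 0 := qPoch_base_ne_zero hq k
  have hU : qPoch p p l ≠ 0 := qPoch_base_ne_zero hp l
  have hu : (1 : ℂ) - p * p ^ l ≠ 0 := by
    apply one_sub_ne_zero_of_abs_lt_one
    rw [norm_mul, norm_pow]
    calc ‖p‖ * ‖p‖ ^ l = ‖p‖ ^ (l + 1) := by ring
      _ < 1 := pow_lt_one₀ (norm_nonneg p) hp (Nat.succ_ne_zero l)
  by_cases hR : qPoch p (C * p) l = 0
  · simp [hR]
  by_cases hS : qPoch q D k = 0
  · simp [hS]
  set c1 : ℂ := 1 - C with hc1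
  set u1 : ℂ := 1 - p * p ^ l with hu1
  set uB : ℂ := 1 - B * p * p ^ l with huB
  set a1 : ℂ := 1 - A with ha1
  set b1 : ℂ := 1 - B with hb1
  have hBu : uB - b1 = B * u1 := by rw [huB, hb1, hu1]; ring
  have hd : c1 * qPoch p (C * p) l * qPoch q D k * qPoch q q k * (qPoch p p l * u1) ≠ 0 := by
    exact mul_ne_zero (mul_ne_zero (mul_ne_zero (mul_ne_zero hC hR) hS) hT)
      (mul_ne_zero hU hu)
  have hd' : c1 * (qPoch p (C * p) l * qPoch q D k * qPoch q q k * qPoch p p l) ≠ 0 := by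
    exact mul_ne_zero hC
      (mul_ne_zero (mul_ne_zero (mul_ne_zero hR hS) hT) hU)
  have e1 : ∀ (N d X Y : ℂ), N / d * X * Y = N * X * Y / d := fun _ _ _ _ => by ring
  have e2 : ∀ (W c V d : ℂ), W / c * (V / d) = W * V / (c * d) := fun _ _ _ _ => by ring
  rw [e1, e1, e1, div_sub_div_same, e2]
  rw [div_eq_div_iff hd hd']
  linear_combination (c1 * qPoch p (C * p) l * qPoch q D k * qPoch q q k * qPoch p p l *
    a1 * qPoch q (A * q) (k + l) * qPoch p (B * p) l * x ^ k * y ^ l * y) * hBu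


private lemma key {q p : ℂ} (A B C D x y : ℂ)
    (hq : ‖q‖ < 1) (hp : ‖p‖ < 1)
    (hx : ‖x‖ < 1) (hy : ‖y‖ < 1)
    (hC : (1 : ℂ) - C ≠ 0) :
    Psi1 q p A (B * p) C D x y =
      Psi1 q p A B C D x y +
        B * (1 - A) * y / (1 - C) * Psi1 q p (A * q) (B * p) (C * p) D x y := by
  have hf := summable_term A (B * p) C D x y hq hp hx hy
  have hg := summable_term A B C D x y hq hp hx hy
  unfold Psi1
  rw [← sub_eq_iff_eq_add']
  rw [← Summable.tsum_sub hf hg]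
  set F : ℕ × ℕ → ℂ := fun kl =>
    qPoch q A (kl.1 + kl.2) * qPoch p (B * p) kl.2 /
        (qPoch p C kl.2 * qPoch q D kl.1 * qPoch q q kl.1 * qPoch p p kl.2) *
        x ^ kl.1 * y ^ kl.2 -
      qPoch q A (kl.1 + kl.2) * qPoch p B kl.2 /
        (qPoch p C kl.2 * qPoch q D kl.1 * qPoch q q kl.1 * qPoch p p kl.2) *
        x ^ kl.1 * y ^ kl.2 with hF
  set e : ℕ × ℕ → ℕ × ℕ := fun km => (km.1, km.2 + 1) with he
  have hinj : Function.Injective e := by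
    rintro ⟨a1, a2⟩ ⟨b1, b2⟩ h
    simp only [he, Prod.mk.injEq] at h
    exact Prod.ext h.1 (by omega)
  have hsupp : Function.support F ⊆ Set.range e := by
    rintro ⟨k, l⟩ h
    cases l with
    | zero =>
        exfalso; apply h
        simp [hF, qPoch_zero, sub_self]
    | succ m => exact ⟨(k, m), rfl⟩
  rw [← hinj.tsum_eq hsupp]
  have hcongr : ∀ km : ℕ × ℕ, F (e km) =
      B * (1 - A) * y / (1 - C) *
        (qPoch q (A * q) (km.1 + km.2) * qPoch p (B * p) km.2 /
          (qPoch p (C * p) km.2 * qPoch q D km.1 * qPoch q q km.1 * qPoch p p km.2) *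
          x ^ km.1 * y ^ km.2) := by
    rintro ⟨k, m⟩
    exact term_rel A B C D x y hq hp hC k m
  rw [tsum_congr hcongr, tsum_mul_left]

theorem stmt2 (q p a b c d x y : ℂ)
    (hq0 : 0 < ‖q‖) (hq1 : ‖q‖ < 1)
    (hp0 : 0 < ‖p‖) (hp1 : ‖p‖ < 1)
    (hx : ‖x‖ < 1) (hy : ‖y‖ < 1)
    (hc : p ^ c ≠ 1) :
    Psi1 q p (q ^ a) (p ^ (b + 1)) (p ^ c) (q ^ d) x y =
      Psi1 q p (q ^ a) (p ^ b) (p ^ c) (q ^ d) x y +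
        p ^ b * (1 - q ^ a) * y / (1 - p ^ c) *
          Psi1 q p (q ^ (a + 1)) (p ^ (b + 1)) (p ^ (c + 1)) (q ^ d) x y := by
  have hq' : q ≠ 0 := by intro h; simp [h] at hq0
  have hp' : p ≠ 0 := by intro h; simp [h] at hp0
  have hb : p ^ (b + 1) = p ^ b * p := by rw [Complex.cpow_add _ _ hp', Complex.cpow_one]
  have ha : q ^ (a + 1) = q ^ a * q := by rw [Complex.cpow_add _ _ hq', Complex.cpow_one]
  have hcc : p ^ (c + 1) = p ^ c * p := by rw [Complex.cpow_add _ _ hp', Complex.cpow_one]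
  rw [hb, ha, hcc]
  exact key (q ^ a) (p ^ b) (p ^ c) (q ^ d) x y hq1 hp1 hx hy
    (sub_ne_zero_of_ne (Ne.symm hc))
end

section
/- For 0<|q|<1, 0<|p|<1, |x|<1, |xy|<1: (1−q^a)·Ψ₁(q^{a+1},p^b;p^c,q^d;q,p,x,xy) = (1−q^a)·Ψ₁(q^a,p^b;p^c,q^d;q,p,x,xy) + (1−q)q^a x·D_{x,q}[Ψ₁(q^a,p^b;p^c,q^d;q,p,x,xy)], where D_{x,q} acts on both occurrences of x (i.e., on the function x ↦ Ψ₁(…;x,xy)). -/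
open scoped BigOperators
open Filter

/-! ### Auxiliary lemmas -/

lemma qPoch_succ' (q z : ℂ) (n : ℕ) : qPoch q z (n+1) = qPoch q z n * (1 - z * q ^ n) :=
  Finset.prod_range_succ _ _

lemma qPoch_shift (q A : ℂ) (n : ℕ) :
    (1 - A) * qPoch q (A * q) n = qPoch q A n * (1 - A * q ^ n) := by
  induction n with
  | zero => simp [qPoch]
  | succ n ih =>
    rw [qPoch_succ', qPoch_succ']
    linear_combination (1 - A * q * q ^ n) * ih

lemma exp_neg_two_le (t : ℝ) (h0 : 0 ≤ t) (h1 : t ≤ 1/2) : Real.exp (-(2*t)) ≤ 1 - t := by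
  have h2 : (2*t) + 1 ≤ Real.exp (2*t) := Real.add_one_le_exp (2*t)
  rw [Real.exp_neg]
  have hpos : (0:ℝ) < 1 + 2*t := by linarith
  have h4 : (Real.exp (2*t))⁻¹ ≤ (1 + 2*t)⁻¹ := by
    apply inv_anti₀ hpos; linarith
  refine h4.trans ?_
  rw [inv_le_iff_one_le_mul₀ hpos]; nlinarith

lemma geom_sum_le' (c : ℝ) (h0 : 0 ≤ c) (h1 : c < 1) (n : ℕ) :
    ∑ r ∈ Finset.range n, c ^ r ≤ 1 / (1 - c) := by
  have h : ∑ r ∈ Finset.range n, c ^ r = (1 - c^n) / (1 - c) := by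
    rw [geom_sum_eq (by linarith)]
    rw [div_eq_div_iff (by linarith) (by linarith)]
    ring
  rw [h]
  gcongr
  · linarith [pow_nonneg h0 n]

lemma norm_qPoch_le (q z : ℂ) (hq : ‖q‖ < 1) (n : ℕ) :
    ‖qPoch q z n‖ ≤ Real.exp (‖z‖ * (1 / (1 - ‖q‖))) := by
  have hq0 : (0:ℝ) ≤ ‖q‖ := norm_nonneg q
  calc ‖qPoch q z n‖ ≤ ∏ r ∈ Finset.range n, (1 + ‖z‖ * ‖q‖ ^ r) := by
        refine (Finset.norm_prod_le _ _).trans ?_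
        apply Finset.prod_le_prod (fun _ _ => norm_nonneg _)
        intro r _
        calc ‖1 - z * q ^ r‖ ≤ ‖(1:ℂ)‖ + ‖z * q^r‖ := norm_sub_le _ _
          _ = 1 + ‖z‖ * ‖q‖^r := by simp
    _ ≤ ∏ r ∈ Finset.range n, Real.exp (‖z‖ * ‖q‖ ^ r) := by
        apply Finset.prod_le_prod
        · intro r _; positivity
        · intro r _; rw [add_comm]; exact Real.add_one_le_exp _
    _ = Real.exp (∑ r ∈ Finset.range n, ‖z‖ * ‖q‖ ^ r) := (Real.exp_sum _ _).symm
    _ ≤ Real.exp (‖z‖ * (1 / (1 - ‖q‖))) := by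
        apply Real.exp_le_exp.mpr
        rw [← Finset.mul_sum]
        exact mul_le_mul_of_nonneg_left (geom_sum_le' _ hq0 hq n) (norm_nonneg z)

lemma qPoch_inv_bound (q w : ℂ) (hq : ‖q‖ < 1) :
    ∃ M : ℝ, 0 < M ∧ ∀ k, ‖qPoch q w k‖⁻¹ ≤ M := by
  have hq0 : (0:ℝ) ≤ ‖q‖ := norm_nonneg q
  have h1q : (0:ℝ) < 1 - ‖q‖ := by linarith
  have htend : Tendsto (fun r : ℕ => ‖w‖ * ‖q‖ ^ r) atTop (nhds 0) := by
    simpa using (tendsto_pow_atTop_nhds_zero_of_lt_one hq0 hq).const_mul ‖w‖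
  have hev : ∀ᶠ r in atTop, ‖w‖ * ‖q‖ ^ r < 1/2 :=
    htend.eventually_lt_const (by norm_num)
  obtain ⟨R, hR⟩ := eventually_atTop.mp hev
  set e₀ : ℝ := Real.exp (-(2 * (‖w‖ * (1 / (1 - ‖q‖))))) with he0
  have he0pos : 0 < e₀ := Real.exp_pos _
  have he0le1 : e₀ ≤ 1 := by
    apply Real.exp_le_one_iff.mpr
    have : 0 ≤ ‖w‖ * (1 / (1 - ‖q‖)) := by positivity
    linarith
  have key : ∀ k, R ≤ k → e₀ ≤ ‖∏ r ∈ Finset.Ico R k, (1 - w * q ^ r)‖ := by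
    intro k hk
    have h1 : ∏ r ∈ Finset.Ico R k, Real.exp (-(2 * (‖w‖ * ‖q‖ ^ r)))
        ≤ ∏ r ∈ Finset.Ico R k, (1 - ‖w‖ * ‖q‖ ^ r) := by
      apply Finset.prod_le_prod (fun r _ => (Real.exp_pos _).le)
      intro r hr
      apply exp_neg_two_le _ (by positivity)
      exact (hR r (Finset.mem_Ico.mp hr).1).le
    have h2 : ∏ r ∈ Finset.Ico R k, (1 - ‖w‖ * ‖q‖ ^ r)
        ≤ ‖∏ r ∈ Finset.Ico R k, (1 - w * q ^ r)‖ := by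
      rw [norm_prod]
      apply Finset.prod_le_prod
      · intro r hr; linarith [hR r (Finset.mem_Ico.mp hr).1]
      · intro r hr
        calc 1 - ‖w‖ * ‖q‖ ^ r = ‖(1:ℂ)‖ - ‖w * q ^ r‖ := by simp
          _ ≤ ‖1 - w * q ^ r‖ := norm_sub_norm_le _ _
    refine le_trans ?_ (h1.trans h2)
    rw [← Real.exp_sum]
    apply Real.exp_le_exp.mpr
    rw [Finset.sum_neg_distrib, neg_le_neg_iff]
    calc ∑ r ∈ Finset.Ico R k, 2 * (‖w‖ * ‖q‖ ^ r)
        ≤ ∑ r ∈ Finset.range k, 2 * (‖w‖ * ‖q‖ ^ r) := by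
          apply Finset.sum_le_sum_of_subset_of_nonneg
          · intro r hr
            exact Finset.mem_range.mpr (Finset.mem_Ico.mp hr).2
          · intro r _ _; positivity
      _ = 2 * (‖w‖ * ∑ r ∈ Finset.range k, ‖q‖ ^ r) := by
          rw [Finset.mul_sum, Finset.mul_sum]
      _ ≤ 2 * (‖w‖ * (1 / (1 - ‖q‖))) := by
          gcongr
          exact geom_sum_le' _ hq0 hq k
  set M₀ : ℝ := 1 + ∑ j ∈ Finset.range (R+1), ‖qPoch q w j‖⁻¹ with hM0
  have hM0pos : 0 < M₀ := by
    have : 0 ≤ ∑ j ∈ Finset.range (R+1), ‖qPoch q w j‖⁻¹ :=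
      Finset.sum_nonneg fun j _ => by positivity
    rw [hM0]; linarith
  have hM0b : ∀ k, k ≤ R → ‖qPoch q w k‖⁻¹ ≤ M₀ := by
    intro k hk
    have := Finset.single_le_sum (f := fun j => ‖qPoch q w j‖⁻¹)
      (fun j _ => by positivity) (Finset.mem_range.mpr (Nat.lt_succ_of_le hk))
    rw [hM0]; linarith
  refine ⟨M₀ / e₀, div_pos hM0pos he0pos, fun k => ?_⟩
  rcases le_or_gt k R with hkR | hkR
  · calc ‖qPoch q w k‖⁻¹ ≤ M₀ := hM0b k hkR
      _ ≤ M₀ / e₀ := by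
        rw [le_div_iff₀ he0pos]
        nlinarith
  · have hsplit : qPoch q w k = qPoch q w R * ∏ r ∈ Finset.Ico R k, (1 - w * q ^ r) := by
      rw [qPoch, qPoch, Finset.prod_range_mul_prod_Ico _ hkR.le]
    have hkey := key k hkR.le
    rw [hsplit, norm_mul, mul_inv]
    calc ‖qPoch q w R‖⁻¹ * ‖∏ r ∈ Finset.Ico R k, (1 - w * q ^ r)‖⁻¹
        ≤ M₀ * e₀⁻¹ := by
          apply mul_le_mul (hM0b R le_rfl) ?_ (by positivity) hM0pos.le
          exact inv_anti₀ he0pos hkey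
      _ = M₀ / e₀ := by rw [div_eq_mul_inv]

/-- the general term of `Psi1`. -/
noncomputable def pTerm (q p A B C D X Y : ℂ) (kl : ℕ × ℕ) : ℂ :=
  qPoch q A (kl.1 + kl.2) * qPoch p B kl.2 /
    (qPoch p C kl.2 * qPoch q D kl.1 * qPoch q q kl.1 * qPoch p p kl.2) *
    X ^ kl.1 * Y ^ kl.2

lemma Psi1_eq_tsum (q p A B C D X Y : ℂ) :
    Psi1 q p A B C D X Y = ∑' kl : ℕ × ℕ, pTerm q p A B C D X Y kl := rfl

lemma pTerm_summable (q p A B C D X Y : ℂ) (hq : ‖q‖ < 1) (hp : ‖p‖ < 1)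
    (hX : ‖X‖ < 1) (hY : ‖Y‖ < 1) :
    Summable (pTerm q p A B C D X Y) := by
  obtain ⟨M1, hM1, hC⟩ := qPoch_inv_bound p C hp
  obtain ⟨M2, hM2, hD⟩ := qPoch_inv_bound q D hq
  obtain ⟨M3, hM3, hqq⟩ := qPoch_inv_bound q q hq
  obtain ⟨M4, hM4, hpp⟩ := qPoch_inv_bound p p hp
  set N1 : ℝ := Real.exp (‖A‖ * (1 / (1 - ‖q‖))) with hN1d
  set N2 : ℝ := Real.exp (‖B‖ * (1 / (1 - ‖p‖))) with hN2d
  have hN1 : 0 < N1 := Real.exp_pos _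
  have hN2 : 0 < N2 := Real.exp_pos _
  set K : ℝ := N1 * N2 * (M1 * M2 * M3 * M4) with hKd
  have hsum : Summable (fun kl : ℕ × ℕ => K * (‖X‖ ^ kl.1 * ‖Y‖ ^ kl.2)) := by
    apply Summable.mul_left
    exact (summable_geometric_of_lt_one (norm_nonneg X) hX).mul_of_nonneg
      (summable_geometric_of_lt_one (norm_nonneg Y) hY)
      (fun k => by positivity) (fun l => by positivity)
  apply Summable.of_norm_bounded hsum
  rintro ⟨k, l⟩
  have hb : ‖pTerm q p A B C D X Y (k, l)‖
      = ‖qPoch q A (k+l)‖ * ‖qPoch p B l‖ *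
        (‖qPoch p C l‖⁻¹ * ‖qPoch q D k‖⁻¹ * ‖qPoch q q k‖⁻¹ * ‖qPoch p p l‖⁻¹) *
        ‖X‖ ^ k * ‖Y‖ ^ l := by
    simp only [pTerm, norm_mul, norm_div, norm_pow, div_eq_mul_inv, mul_inv, norm_inv]
  rw [hb]
  calc ‖qPoch q A (k+l)‖ * ‖qPoch p B l‖ *
        (‖qPoch p C l‖⁻¹ * ‖qPoch q D k‖⁻¹ * ‖qPoch q q k‖⁻¹ * ‖qPoch p p l‖⁻¹) *
        ‖X‖ ^ k * ‖Y‖ ^ l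
      ≤ N1 * N2 * (M1 * M2 * M3 * M4) * ‖X‖ ^ k * ‖Y‖ ^ l := by
        gcongr <;> first
          | exact norm_qPoch_le q A hq (k+l)
          | exact norm_qPoch_le p B hp l
          | exact hC l | exact hD k | exact hqq k | exact hpp l
    _ = K * (‖X‖ ^ k * ‖Y‖ ^ l) := by rw [hKd]; ring

theorem stmt11 (q p a b c d x y : ℂ)
    (hq0 : 0 < ‖q‖) (hq1 : ‖q‖ < 1)
    (hp0 : 0 < ‖p‖) (hp1 : ‖p‖ < 1)
    (hx : ‖x‖ < 1) (hxy : ‖x * y‖ < 1) :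
    (1 - q ^ a) * Psi1 q p (q ^ (a + 1)) (p ^ b) (p ^ c) (q ^ d) x (x * y) =
      (1 - q ^ a) * Psi1 q p (q ^ a) (p ^ b) (p ^ c) (q ^ d) x (x * y) +
        (1 - q) * q ^ a * x *
          qDiff q (fun t => Psi1 q p (q ^ a) (p ^ b) (p ^ c) (q ^ d) t (t * y)) x := by
  have hq : q ≠ 0 := by
    intro h; rw [h] at hq0; simp at hq0
  have hnq : ‖q‖ < 1 := by exact hq1
  have hnp : ‖p‖ < 1 := by exact hp1
  have hnx : ‖x‖ < 1 := by exact hx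
  have hnxy : ‖x * y‖ < 1 := by exact hxy
  have h1q : (1:ℂ) - q ≠ 0 := by
    apply sub_ne_zero.mpr
    intro h
    rw [← h] at hq1
    simp at hq1
  have hA1 : q ^ (a + 1 : ℂ) = q ^ (a : ℂ) * q := by
    rw [Complex.cpow_add _ _ hq, Complex.cpow_one]
  by_cases hx0 : x = 0
  · subst hx0
    have hPsi : Psi1 q p (q ^ (a+1)) (p^b) (p^c) (q^d) 0 (0*y) =
        Psi1 q p (q ^ a) (p^b) (p^c) (q^d) 0 (0*y) := by
      unfold Psi1
      apply tsum_congr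
      rintro ⟨k, l⟩
      rcases k with _ | k
      · rcases l with _ | l
        · simp [qPoch]
        · simp
      · simp
    rw [hPsi]; ring
  · -- x ≠ 0
    have hnqx : ‖q * x‖ < 1 := by
      rw [norm_mul]
      nlinarith [norm_nonneg q, norm_nonneg x]
    have hnqxy : ‖(q * x) * y‖ < 1 := by
      rw [mul_assoc, norm_mul]
      nlinarith [norm_nonneg q, norm_nonneg (x*y)]
    have hS2 : Summable (pTerm q p (q^a) (p^b) (p^c) (q^d) x (x*y)) :=
      pTerm_summable _ _ _ _ _ _ _ _ hnq hnp hnx hnxy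
    have hS3 : Summable (pTerm q p (q^a) (p^b) (p^c) (q^d) (q*x) ((q*x)*y)) :=
      pTerm_summable _ _ _ _ _ _ _ _ hnq hnp hnqx hnqxy
    have hdiff : (1 - q) * q ^ a * x *
        qDiff q (fun t => Psi1 q p (q ^ a) (p ^ b) (p ^ c) (q ^ d) t (t * y)) x
        = q ^ a * (Psi1 q p (q^a) (p^b) (p^c) (q^d) x (x*y)
            - Psi1 q p (q^a) (p^b) (p^c) (q^d) (q*x) ((q*x)*y)) := by
      simp only [qDiff]
      field_simp
    rw [hdiff, hA1]
    rw [Psi1_eq_tsum, Psi1_eq_tsum, Psi1_eq_tsum]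
    rw [← tsum_mul_left (a := 1 - q^(a:ℂ))
        (f := pTerm q p (q^(a:ℂ) * q) (p^b) (p^c) (q^d) x (x*y))]
    rw [← Summable.tsum_sub hS2 hS3]
    rw [← tsum_mul_left (a := 1 - q^(a:ℂ))
        (f := pTerm q p (q^(a:ℂ)) (p^b) (p^c) (q^d) x (x*y))]
    rw [← tsum_mul_left (a := q^(a:ℂ))]
    rw [← Summable.tsum_add (hS2.mul_left _) ((hS2.sub hS3).mul_left _)]
    apply tsum_congr
    rintro ⟨k, l⟩
    simp only [pTerm, Pi.sub_apply]
    have h := qPoch_shift q (q^(a:ℂ)) (k+l)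
    linear_combination (qPoch p (p^(b:ℂ)) l /
      (qPoch p (p^(c:ℂ)) l * qPoch q (q^(d:ℂ)) k * qPoch q q k * qPoch p p l) *
      x^k * (x*y)^l) * h
end
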